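/- Let M ⊆ ℝ³ be constructible, with interior M° in ℝ³, and let τ be a topology on M such that M° is τ-open and τ-dense in M and τ|M° = τ#|M°, where τ# is the standard topology. Then for every Z ⊆ M, Z is meager in (M,τ) if and only if Z is meager in ℝ³. -/

import Mathlib

/-- A set is constructible if it is a finite union of locally closed sets. -/
def IsConstructibleSet {X : Type*} [TopologicalSpace X] (M : Set X) : Prop :=
  ∃ (n : ℕ) (U C : Fin n → Set X), (∀ i, IsOpen (U i)) ∧ (∀ i, IsClosed (C i)) ∧
    M = ⋃ i, U i ∩ C i

open Set

/-- Subsets of nowhere dense sets are nowhere dense. -/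
lemma my_nwd_mono {X : Type*} [TopologicalSpace X] {s u : Set X}
    (h : IsNowhereDense u) (hsu : s ⊆ u) : IsNowhereDense s := by
  rw [IsNowhereDense] at h ⊢
  have := interior_mono (closure_mono hsu)
  rw [h] at this
  exact subset_empty_iff.mp this

/-- The image of `S` is the interior of `M`. -/
lemma my_image_S {X : Type*} [TopologicalSpace X] {M : Set X} {S : Set M}
    (hS : S = Subtype.val ⁻¹' interior M) :
    Subtype.val '' S = interior M := by
  rw [hS, Set.image_preimage_eq_inter_range, Subtype.range_coe]
  exact inter_eq_left.mpr interior_subset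

/-- Push: a τ-nowhere dense subset of S has nowhere dense image. -/
lemma my_push {X : Type*} [TopologicalSpace X] {M : Set X} (t : TopologicalSpace M)
    {S : Set M} (hS : S = Subtype.val ⁻¹' interior M)
    (hSopen : @IsOpen M t S)
    (hrestrict : ∀ V : Set M, V ⊆ S → (@IsOpen M t V ↔ IsOpen (Subtype.val '' V)))
    {A : Set M} (hAS : A ⊆ S) (hA : @IsNowhereDense M t A) :
    IsNowhereDense (Subtype.val '' A) := by
  letI := t
  by_contra h
  rw [IsNowhereDense, ← Ne, ← nonempty_iff_ne_empty] at h
  obtain ⟨x, hx⟩ := h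
  set O := interior (closure (Subtype.val '' A)) with hO
  have hOopen : IsOpen O := isOpen_interior
  have hAT : Subtype.val '' A ⊆ interior M := by
    rw [← my_image_S hS]; exact image_mono hAS
  have hxT : x ∈ closure (interior M) := closure_mono hAT (interior_subset hx)
  -- O meets interior M
  have hOT : (O ∩ interior M).Nonempty := by
    rw [mem_closure_iff] at hxT
    exact hxT O hOopen hx
  -- the τ-open set V := val ⁻¹' O ∩ S
  set V : Set M := Subtype.val ⁻¹' O ∩ S with hV
  have hVS : V ⊆ S := inter_subset_right
  have hVimage : Subtype.val '' V = O ∩ interior M := by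
    rw [hV, image_inter Subtype.val_injective, my_image_S hS,
      Set.image_preimage_eq_inter_range, Subtype.range_coe]
    rw [inter_assoc]
    congr 1
    exact inter_eq_right.mpr interior_subset
  have hVopen : IsOpen V := by
    rw [hrestrict V hVS, hVimage]
    exact hOopen.inter isOpen_interior
  have hVne : V.Nonempty := by
    obtain ⟨y, hy⟩ := hOT
    rw [← hVimage] at hy
    obtain ⟨v, hv, -⟩ := hy
    exact ⟨v, hv⟩
  -- V ⊆ τ-closure of A
  have hVcl : V ⊆ closure A := by
    intro v hv
    rw [mem_closure_iff]
    intro N hN hvN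
    -- the set N ∩ S is τ-open with open image containing val v
    have hNS : IsOpen (N ∩ S) := hN.inter hSopen
    have hNSopen : IsOpen (Subtype.val '' (N ∩ S)) :=
      (hrestrict (N ∩ S) inter_subset_right).mp hNS
    have hvNS : (v : X) ∈ Subtype.val '' (N ∩ S) :=
      mem_image_of_mem _ ⟨hvN, hVS hv⟩
    have hvcl : (v : X) ∈ closure (Subtype.val '' A) := interior_subset hv.1
    rw [mem_closure_iff] at hvcl
    obtain ⟨y, hy1, hy2⟩ := hvcl (Subtype.val '' (N ∩ S)) hNSopen hvNS
    obtain ⟨a, haA, haeq⟩ := hy2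
    obtain ⟨b, hbNS, hbeq⟩ := hy1
    have : b = a := Subtype.val_injective (hbeq.trans haeq.symm)
    exact ⟨a, this ▸ hbNS.1, haA⟩
  -- contradiction with nowhere density of A
  have : V ⊆ interior (closure A) := interior_maximal hVcl hVopen
  rw [hA] at this
  exact absurd (subset_empty_iff.mp this) (nonempty_iff_ne_empty.mp hVne)

/-- Pull: a subset of S with nowhere dense image is τ-nowhere dense. -/
lemma my_pull {X : Type*} [TopologicalSpace X] {M : Set X} (t : TopologicalSpace M)
    {S : Set M} (hS : S = Subtype.val ⁻¹' interior M)
    (hSdense : @Dense M t S)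
    (hrestrict : ∀ V : Set M, V ⊆ S → (@IsOpen M t V ↔ IsOpen (Subtype.val '' V)))
    {A : Set M} (hAS : A ⊆ S) (hA : IsNowhereDense (Subtype.val '' A)) :
    @IsNowhereDense M t A := by
  letI := t
  by_contra h
  rw [IsNowhereDense, ← Ne, ← nonempty_iff_ne_empty] at h
  obtain ⟨w, hw⟩ := h
  set W := interior (closure A) with hW
  have hWopen : IsOpen W := isOpen_interior
  -- W meets S
  have hUne : (W ∩ S).Nonempty := by
    have := dense_iff_inter_open.mp hSdense W hWopen ⟨w, hw⟩
    obtain ⟨y, hy1, hy2⟩ := this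
    exact ⟨y, hy1, hy2⟩
  set U : Set M := W ∩ S with hU
  have hUS : U ⊆ S := inter_subset_right
  have hUopen : IsOpen U := hWopen.inter
    ((hrestrict S subset_rfl).mpr (by rw [my_image_S hS]; exact isOpen_interior))
  have hUimgopen : IsOpen (Subtype.val '' U) := (hrestrict U hUS).mp hUopen
  have hUimgne : (Subtype.val '' U).Nonempty := hUne.image _
  -- image of U is inside the closure of the image of A
  have hUcl : Subtype.val '' U ⊆ closure (Subtype.val '' A) := by
    rintro x ⟨u, hu, rfl⟩
    rw [mem_closure_iff]
    intro O hOopen hxO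
    set N : Set M := Subtype.val ⁻¹' O ∩ S with hN
    have hNS : N ⊆ S := inter_subset_right
    have hNimage : Subtype.val '' N = O ∩ interior M := by
      rw [hN, image_inter Subtype.val_injective, my_image_S hS,
        Set.image_preimage_eq_inter_range, Subtype.range_coe, inter_assoc]
      congr 1
      exact inter_eq_right.mpr interior_subset
    have hNopen : IsOpen N := by
      rw [hrestrict N hNS, hNimage]
      exact hOopen.inter isOpen_interior
    have huN : u ∈ N := ⟨hxO, hUS hu⟩
    have hucl : u ∈ closure A := interior_subset hu.1
    rw [mem_closure_iff] at hucl
    obtain ⟨a, haN, haA⟩ := hucl N hNopen huN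
    exact ⟨(a : X), haN.1, mem_image_of_mem _ haA⟩
  have : Subtype.val '' U ⊆ interior (closure (Subtype.val '' A)) :=
    interior_maximal hUcl hUimgopen
  rw [hA] at this
  exact absurd (subset_empty_iff.mp this) (nonempty_iff_ne_empty.mp hUimgne)

/-- For a constructible M ⊆ ℝ³ with a topology τ on M whose restriction to the
interior M° agrees with the standard one, and M° τ-open and τ-dense,
Z ⊆ M is τ-meager iff it is meager in ℝ³. -/
theorem stmt4 (M : Set (Fin 3 → ℝ)) (hM : IsConstructibleSet M)
    (t : TopologicalSpace M)
    (S : Set M) (hS : S = Subtype.val ⁻¹' interior M)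
    (hSopen : @IsOpen M t S) (hSdense : @Dense M t S)
    (hrestrict : ∀ V : Set M, V ⊆ S →
      (@IsOpen M t V ↔ IsOpen (Subtype.val '' V))) :
    ∀ Z : Set M, @IsMeagre M t Z ↔ IsMeagre (Subtype.val '' Z) := by
  obtain ⟨n, U, C, hU, hC, hMeq⟩ := hM
  -- The frontiers of the closed pieces cover M \ interior M and are nowhere dense.
  set F : Set (Set (Fin 3 → ℝ)) := Set.range (fun i => frontier (C i)) with hF
  have hFnwd : ∀ s ∈ F, IsNowhereDense s := by
    rintro s ⟨i, rfl⟩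
    exact isClosed_frontier.isNowhereDense_iff.mpr (interior_frontier (hC i))
  have hFcnt : F.Countable := (Set.finite_range _).countable
  have hMdiff : M \ interior M ⊆ ⋃₀ F := by
    rintro x ⟨hxM, hxI⟩
    rw [hMeq] at hxM
    obtain ⟨i, hxi⟩ := mem_iUnion.mp hxM
    refine ⟨frontier (C i), ⟨i, rfl⟩, ?_⟩
    refine ⟨subset_closure hxi.2, fun hint => hxI ?_⟩
    have : U i ∩ interior (C i) ⊆ M := by
      rw [hMeq]
      exact ((inter_subset_inter_right _ interior_subset).trans
        (subset_iUnion (fun j => U j ∩ C j) i))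
    exact interior_maximal this ((hU i).inter isOpen_interior) ⟨hxi.1, hint⟩
  -- Sᶜ is τ-nowhere dense
  have hScnwd : @IsNowhereDense M t Sᶜ := by
    letI := t
    have hclosed : IsClosed Sᶜ := hSopen.isClosed_compl
    rw [hclosed.isNowhereDense_iff, interior_compl,
      dense_iff_closure_eq.mp hSdense, compl_univ]
  intro Z
  letI := t
  constructor
  · -- τ-meager ⇒ meager in ℝ³
    intro hZ
    obtain ⟨𝒮, h𝒮nwd, h𝒮cnt, h𝒮cov⟩ :=
      isMeagre_iff_countable_union_isNowhereDense.mp hZ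
    rw [isMeagre_iff_countable_union_isNowhereDense]
    refine ⟨F ∪ ((fun s => Subtype.val '' (s ∩ S)) '' 𝒮), ?_, hFcnt.union (h𝒮cnt.image _), ?_⟩
    · rintro s (hs | ⟨u, hu, rfl⟩)
      · exact hFnwd s hs
      · exact my_push t hS hSopen hrestrict inter_subset_right
          (my_nwd_mono (h𝒮nwd u hu) inter_subset_left)
    · rintro x ⟨z, hzZ, rfl⟩
      by_cases hzS : z ∈ S
      · obtain ⟨s, hs𝒮, hzs⟩ := h𝒮cov hzZ
        exact ⟨Subtype.val '' (s ∩ S), Or.inr ⟨s, hs𝒮, rfl⟩, mem_image_of_mem _ ⟨hzs, hzS⟩⟩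
      · have hzM : (z : Fin 3 → ℝ) ∈ M \ interior M :=
          ⟨z.2, fun hint => hzS (by rw [hS]; exact hint)⟩
        obtain ⟨s, hsF, hxs⟩ := hMdiff hzM
        exact ⟨s, Or.inl hsF, hxs⟩
  · -- meager in ℝ³ ⇒ τ-meager
    intro hZ
    obtain ⟨𝒮, h𝒮nwd, h𝒮cnt, h𝒮cov⟩ := isMeagre_iff_countable_union_isNowhereDense.mp hZ
    rw [isMeagre_iff_countable_union_isNowhereDense]
    refine ⟨insert Sᶜ ((fun s => Subtype.val ⁻¹' s ∩ S) '' 𝒮), ?_,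
      (h𝒮cnt.image _).insert _, ?_⟩
    · rintro s (rfl | ⟨u, hu, rfl⟩)
      · exact hScnwd
      · refine my_pull t hS hSdense hrestrict inter_subset_right (my_nwd_mono (h𝒮nwd u hu) ?_)
        rintro x ⟨a, ⟨ha1, -⟩, rfl⟩
        exact ha1
    · intro z hzZ
      by_cases hzS : z ∈ S
      · obtain ⟨s, hs𝒮, hzs⟩ := h𝒮cov (mem_image_of_mem _ hzZ)
        exact ⟨Subtype.val ⁻¹' s ∩ S, Or.inr ⟨s, hs𝒮, rfl⟩, hzs, hzS⟩
      · exact ⟨Sᶜ, Or.inl rfl, hzS⟩
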